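/- The palindromic z-factorization of the Fibonacci word f is the sequence of singular words: pz(f) = (f̂_1, f̂_2, f̂_3, …). That is, f = f̂_1 f̂_2 f̂_3 ⋯ and, for every i ≥ 1, f̂_i is the shortest palindromic prefix of the suffix f̂_i f̂_{i+1} f̂_{i+2} ⋯ that has no occurrence in f at any position j < |f̂_1 f̂_2 ⋯ f̂_{i−1}|. -/

import Mathlib

/-- The finite word `u` occurs at position `j` in the infinite word `w`. -/
def OccursAt (u : List ℕ) (w : ℕ → ℕ) (j : ℕ) : Prop :=
  ∀ i < u.length, w (j + i) = u.getD i 0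

/-- The finite word `u` is a prefix of the infinite word `w`. -/
def InfPrefix (u : List ℕ) (w : ℕ → ℕ) : Prop :=
  OccursAt u w 0

/-- The suffix of the infinite word `w` starting at position `j`. -/
def suffixFrom (w : ℕ → ℕ) (j : ℕ) : ℕ → ℕ :=
  fun i => w (j + i)

/-- The finite word `u` is a palindrome. -/
def Pal (u : List ℕ) : Prop := u.reverse = u
/-- The sequence `z` of finite words is the palindromic z-factorization of the
infinite word `w`: the partial concatenations are prefixes of `w` whose lengths tend to
infinity (so that `w = z 0 · z 1 · z 2 ⋯`), and each factor `z i` is the shortest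
non-empty palindromic prefix of the remaining suffix of `w` having no occurrence in `w`
at any position `j < |z 0 ⋯ z (i-1)|`. -/
def IsPalZFact (w : ℕ → ℕ) (z : ℕ → List ℕ) : Prop :=
  (∀ n, InfPrefix (((List.range n).map z).flatten) w) ∧
  (∀ N, ∃ n, N ≤ (((List.range n).map z).flatten).length) ∧
  (∀ i,
    z i ≠ [] ∧ Pal (z i) ∧
    InfPrefix (z i) (suffixFrom w (((List.range i).map z).flatten).length) ∧
    (¬ ∃ j < (((List.range i).map z).flatten).length, OccursAt (z i) w j) ∧
    (∀ u : List ℕ, u ≠ [] → Pal u →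
      InfPrefix u (suffixFrom w (((List.range i).map z).flatten).length) →
      (¬ ∃ j < (((List.range i).map z).flatten).length, OccursAt u w j) →
      (z i).length ≤ u.length))
/-- The Fibonacci morphism `φ : 0 ↦ 01, 1 ↦ 0` on letters. -/
def phiF (a : ℕ) : List ℕ := if a = 0 then [0, 1] else [0]

/-- The Fibonacci morphism applied to a finite word. -/
def phiFW (u : List ℕ) : List ℕ := u.flatMap phiF

/-- The iterates `h n = φⁿ(0)` of the Fibonacci morphism on `0`. -/
def fibh : ℕ → List ℕ
  | 0 => [0]
  | n + 1 => phiFW (fibh n)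

/-- The Fibonacci word, the infinite fixed point of `φ` beginning with `0`
(its `i`-th letter is the `i`-th letter of any sufficiently long iterate `φⁿ(0)`). -/
def fibWord : ℕ → ℕ := fun i => (fibh (i + 1)).getD i 0

/-- The singular words of the Fibonacci word:
`f̂ 0 = ε`, `f̂ 1 = 0`, `f̂ 2 = 1`, `f̂ 3 = 00`, and `f̂ n = f̂ (n-2) f̂ (n-3) f̂ (n-2)` for `n ≥ 4`. -/
def fhat : ℕ → List ℕ
  | 0 => []
  | 1 => [0]
  | 2 => [1]
  | 3 => [0, 0]
  | n + 4 => fhat (n + 2) ++ fhat (n + 1) ++ fhat (n + 2)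

/- infrastructure -/
lemma phiFW_append (a b : List ℕ) : phiFW (a ++ b) = phiFW a ++ phiFW b :=
  List.flatMap_append

lemma fibh_add_two (n : ℕ) : fibh (n + 2) = fibh (n + 1) ++ fibh n := by
  induction n with
  | zero => rfl
  | succ n ih =>
    show phiFW (fibh (n + 2)) = fibh (n + 2) ++ fibh (n + 1)
    rw [ih, phiFW_append, show phiFW (fibh (n+1)) = fibh (n+2) from rfl,
      show phiFW (fibh n) = fibh (n+1) from rfl, ih, List.append_assoc]

lemma fibh_length (n : ℕ) : (fibh n).length = Nat.fib (n + 2) := by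
  induction n using Nat.strong_induction_on with
  | _ n ih =>
    match n with
    | 0 => rfl
    | 1 => rfl
    | n + 2 =>
      rw [fibh_add_two, List.length_append, ih (n+1) (by omega), ih n (by omega)]
      show Nat.fib (n + 3) + Nat.fib (n + 2) = Nat.fib (n + 4)
      have h2 : Nat.fib (n+4) = Nat.fib (n+2) + Nat.fib (n+3) := Nat.fib_add_two
      omega

lemma fib_lb (n : ℕ) : n + 1 ≤ Nat.fib (n + 2) := by
  induction n with
  | zero => simp
  | succ n ih =>
    show n + 2 ≤ Nat.fib (n + 3)
    have h1 : 0 < Nat.fib (n + 1) := Nat.fib_pos.mpr (by omega)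
    have h2 : Nat.fib (n+3) = Nat.fib (n+1) + Nat.fib (n+2) := Nat.fib_add_two
    omega

lemma fibh_prefix (n : ℕ) : fibh n <+: fibh (n + 1) := by
  cases n with
  | zero => exact ⟨[1], rfl⟩
  | succ n => rw [fibh_add_two]; exact List.prefix_append _ _

lemma fibh_prefix_le {m n : ℕ} (h : m ≤ n) : fibh m <+: fibh n := by
  induction n with
  | zero => cases Nat.le_zero.mp h; exact List.prefix_rfl
  | succ n ih =>
    rcases Nat.lt_or_ge m (n+1) with h' | h'
    · exact (ih (by omega)).trans (fibh_prefix n)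
    · have : m = n + 1 := by omega
      subst this; exact List.prefix_rfl

lemma getD_prefix {l l' : List ℕ} (h : l <+: l') {i : ℕ} (hi : i < l.length) :
    l'.getD i 0 = l.getD i 0 := by
  rw [List.getD_eq_getElem _ _ hi, List.getD_eq_getElem _ _ (hi.trans_le h.length_le)]
  exact (h.getElem hi).symm

lemma fibWord_eq {n i : ℕ} (hi : i < (fibh n).length) :
    fibWord i = (fibh n).getD i 0 := by
  have h1 : i < (fibh (i + 1)).length := by
    rw [fibh_length]; have := fib_lb (i + 1); omega
  rcases le_or_gt n (i + 1) with h | h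
  · rw [show fibWord i = (fibh (i+1)).getD i 0 from rfl,
      getD_prefix (fibh_prefix_le h) hi]
  · exact (getD_prefix (fibh_prefix_le (by omega : i + 1 ≤ n)) h1).symm

def ee (n : ℕ) : List ℕ := if n % 2 = 1 then [0, 1] else [1, 0]

lemma ee_add_two (n : ℕ) : ee (n + 2) = ee n := by
  unfold ee; rw [Nat.add_mod_right]

lemma lemC : ∀ n, ∃ x : List ℕ,
    fibh (n + 1) ++ fibh n = x ++ ee n ∧ fibh n ++ fibh (n + 1) = x ++ ee (n + 1) := by
  intro n
  induction n with
  | zero => exact ⟨[0], rfl, rfl⟩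
  | succ n ih =>
    obtain ⟨x, h1, h2⟩ := ih
    refine ⟨fibh (n + 1) ++ x, ?_, ?_⟩
    · rw [fibh_add_two, List.append_assoc, h2, ← List.append_assoc]
    · rw [fibh_add_two, List.append_assoc, h1, ← List.append_assoc,
        show ee (n + 1 + 1) = ee n from ee_add_two n, List.append_assoc]

lemma fibh_ne_nil (n : ℕ) : fibh n ≠ [] := by
  have h1 := fibh_length n
  have h2 := fib_lb n
  intro h; rw [h] at h1; simp at h1; omega

/-- last letter of `fibh n` is `n % 2`. -/
lemma fibh_concat : ∀ n, fibh n = (fibh n).dropLast ++ [n % 2] := by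
  intro n
  induction n using Nat.strong_induction_on with
  | _ n ih =>
    match n with
    | 0 => rfl
    | 1 => rfl
    | n + 2 =>
      rw [fibh_add_two, List.dropLast_append_of_ne_nil (fibh_ne_nil n),
        show (n + 2) % 2 = n % 2 from Nat.add_mod_right n 2,
        List.append_assoc, ← ih n (by omega)]

/-- singular word structure: `f̂ (n+2) = δ · dropLast (fibh n)`. -/
lemma fhat_struct : ∀ n, fhat (n + 2) = [(n + 1) % 2] ++ (fibh n).dropLast := by
  intro n
  induction n using Nat.strong_induction_on with
  | _ n ih =>
    match n with
    | 0 => rfl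
    | 1 => rfl
    | 2 => rfl
    | m + 3 =>
      show fhat (m + 1 + 4) = _
      rw [fhat, ih (m + 1) (by omega), ih m (by omega)]
      rw [fibh_add_two, List.dropLast_append_of_ne_nil (fibh_ne_nil (m + 1)),
        show fibh (m + 2) = fibh (m + 1) ++ fibh m from fibh_add_two m,
        show fibh (m + 1) = (fibh (m+1)).dropLast ++ [(m+1) % 2] from fibh_concat (m+1),
        show fibh m = (fibh m).dropLast ++ [m % 2] from fibh_concat m]
      have e1 : (m + 3 + 1) % 2 = (m + 1) % 2 ∨ (m + 3 + 1) % 2 = m % 2 := by omega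
      have e2 : (m + 2) % 2 = m % 2 := by omega
      rw [e2, show (m + 3 + 1) % 2 = m % 2 from by omega]
      simp only [List.dropLast_concat, List.append_assoc]

lemma fhat_length : ∀ n, (fhat (n + 1)).length = Nat.fib (n + 1) := by
  intro n
  cases n with
  | zero => rfl
  | succ m =>
    rw [show m + 1 + 1 = m + 2 from rfl, fhat_struct m]
    have h1 := fibh_length m
    have h2 := fib_lb m
    simp [List.length_dropLast, h1]
    have h3 : Nat.fib (m + 2) = Nat.fib m + Nat.fib (m + 1) := Nat.fib_add_two
    omega

lemma fhat_pal : ∀ n, (fhat n).reverse = fhat n := by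
  intro n
  induction n using Nat.strong_induction_on with
  | _ n ih =>
    match n with
    | 0 => rfl
    | 1 => rfl
    | 2 => rfl
    | 3 => rfl
    | m + 4 =>
      rw [fhat, List.reverse_append, List.reverse_append,
        ih (m + 2) (by omega), ih (m + 1) (by omega), List.append_assoc]

/-- partial concatenation of singular words. -/
lemma flatten_fhat : ∀ i, ((List.range i).map (fun k => fhat (k + 1))).flatten
    = (fibh i).dropLast := by
  intro i
  induction i with
  | zero => rfl
  | succ i ih =>
    rw [List.range_succ, List.map_append, List.flatten_append, ih]
    cases i with
    | zero => rfl
    | succ m =>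
      simp only [List.map_cons, List.map_nil, List.flatten_cons, List.flatten_nil,
        List.append_nil]
      rw [show m + 1 + 1 = m + 2 from rfl, fhat_struct m,
        show fibh (m + 2) = fibh (m + 1) ++ fibh m from fibh_add_two m,
        List.dropLast_append_of_ne_nil (fibh_ne_nil m)]
      conv_rhs => rw [show fibh (m + 1) = (fibh (m+1)).dropLast ++ [(m+1) % 2] from fibh_concat (m+1)]
      simp only [List.append_assoc]

lemma fibh_sum : ∀ n, (fibh n).sum = Nat.fib n := by
  intro n
  induction n using Nat.strong_induction_on with
  | _ n ih =>
    match n with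
    | 0 => rfl
    | 1 => rfl
    | n + 2 =>
      rw [fibh_add_two, List.sum_append, ih (n + 1) (by omega), ih n (by omega),
        Nat.fib_add_two, Nat.add_comm]

lemma fhat_sum_ne (n : ℕ) : (fhat (n + 2)).sum ≠ Nat.fib n := by
  rw [fhat_struct n]
  have h1 : (fibh n).sum = (fibh n).dropLast.sum + n % 2 := by
    conv_lhs => rw [fibh_concat n]
    simp
  rw [fibh_sum] at h1
  simp only [List.sum_append, List.sum_cons, List.sum_nil]
  omega

lemma sum_eq_getD (l : List ℕ) : l.sum = ∑ t ∈ Finset.range l.length, l.getD t 0 := by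
  induction l with
  | nil => rfl
  | cons a l ih =>
    rw [List.sum_cons, List.length_cons, Finset.sum_range_succ', ih]
    simp [List.getD_cons_succ, List.getD_cons_zero, Nat.add_comm]

lemma trip_getD (l : List ℕ) (i : ℕ) (h : i < 2 * l.length) :
    (l ++ (l ++ l)).getD (i + l.length) 0 = (l ++ (l ++ l)).getD i 0 := by
  rcases Nat.lt_or_ge i l.length with h1 | h1
  · rw [List.getD_append_right _ _ _ _ (by omega),
      List.getD_append _ _ _ _ h1,
      show i + l.length - l.length = i from by omega,
      List.getD_append _ _ _ _ h1]
  · rw [List.getD_append_right _ _ _ _ (by omega),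
      List.getD_append_right _ _ _ _ h1,
      show i + l.length - l.length = i from by omega,
      List.getD_append_right _ _ _ _ (by omega : l.length ≤ i),
      List.getD_append _ _ _ _ (by omega : i - l.length < l.length)]

/-- the period lemma: `fibWord` has period `fib (m+2)` on its prefix of length
`fib (m+4) - 2`. -/
lemma periodF (m p : ℕ) (h : p + Nat.fib (m + 2) ≤ Nat.fib (m + 4) - 3) :
    fibWord (p + Nat.fib (m + 2)) = fibWord p := by
  match m with
  | 0 =>
    exfalso
    have e1 : Nat.fib 2 = 1 := rfl
    have e2 : Nat.fib 4 = 3 := rfl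
    rw [e1, e2] at h; omega
  | k + 1 =>
    set m := k + 1 with hm
    obtain ⟨x, h1, h2⟩ := lemC m
    have he : ∀ j, (ee j).length = 2 := by intro j; unfold ee; split <;> rfl
    have fib1 : Nat.fib (m + 4) = Nat.fib (m + 2) + Nat.fib (m + 3) := Nat.fib_add_two
    have fib2 : Nat.fib (m + 5) = Nat.fib (m + 3) + Nat.fib (m + 4) := Nat.fib_add_two
    have fib3 : Nat.fib (m + 3) = Nat.fib (m + 1) + Nat.fib (m + 2) := Nat.fib_add_two
    have fibmono : Nat.fib (m + 1) ≤ Nat.fib (m + 2) := Nat.fib_le_fib_succ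
    have lx : x.length + 2 = Nat.fib (m + 4) := by
      have hl := congrArg List.length h1
      rw [List.length_append, List.length_append, he, fibh_length, fibh_length] at hl
      rw [show m + 1 + 2 = m + 3 from rfl] at hl
      omega
    -- x is a prefix of fibh (m + 3)
    have hpre : x <+: fibh (m + 3) := by
      have e : fibh (m + 3) = (fibh (m + 1) ++ fibh m) ++ fibh (m + 1) := by
        rw [fibh_add_two, fibh_add_two]
      rw [e, h1]
      exact (List.prefix_append x (ee m)).trans ((x ++ ee m).prefix_append _)
    -- x is a prefix of the triple fibh m ++ (fibh m ++ fibh m)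
    have htrip : x <+: fibh m ++ (fibh m ++ fibh m) := by
      have e : fibh (m + 1) <+: fibh m ++ fibh m := by
        rw [hm, fibh_add_two]
        obtain ⟨t, ht⟩ := fibh_prefix_le (show k ≤ k + 1 by omega)
        exact ⟨t, by rw [List.append_assoc, ht]⟩
      refine (List.prefix_append x (ee (m + 1))).trans ?_
      rw [← h2]
      obtain ⟨t, ht⟩ := e
      exact ⟨t, by rw [List.append_assoc, ht]⟩
    -- getD chain
    have hlen3 : (fibh (m + 3)).length = Nat.fib (m + 5) := fibh_length (m + 3)
    have hlenm : (fibh m).length = Nat.fib (m + 2) := fibh_length m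
    have hb : p + Nat.fib (m + 2) < x.length := by omega
    have key : ∀ q, q < x.length →
        fibWord q = (fibh m ++ (fibh m ++ fibh m)).getD q 0 := by
      intro q hq
      rw [fibWord_eq (n := m + 3) (by omega), getD_prefix hpre hq,
        ← getD_prefix htrip hq]
    rw [key _ hb, key _ (by omega)]
    have hp2 : p < 2 * (fibh m).length := by omega
    rw [show p + Nat.fib (m + 2) = p + (fibh m).length from by rw [hlenm]]
    exact trip_getD _ _ hp2

lemma occ_reduce (k : ℕ) : ∀ j, j ≤ Nat.fib (k + 3) - 2 →
    OccursAt (fhat (k + 2)) fibWord j →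
    ∃ r < Nat.fib (k + 2), OccursAt (fhat (k + 2)) fibWord r := by
  intro j
  induction j using Nat.strong_induction_on with
  | _ j ih =>
    intro hj occ
    have hW : (fhat (k + 2)).length = Nat.fib (k + 2) := fhat_length (k + 1)
    have fibp : 0 < Nat.fib (k + 2) := Nat.fib_pos.mpr (by omega)
    rcases Nat.lt_or_ge j (Nat.fib (k + 2)) with h | h
    · exact ⟨j, h, occ⟩
    · have fib1 : Nat.fib (k + 4) = Nat.fib (k + 2) + Nat.fib (k + 3) := Nat.fib_add_two
      have fibp3 : 0 < Nat.fib (k + 3) := Nat.fib_pos.mpr (by omega)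
      have occ' : OccursAt (fhat (k + 2)) fibWord (j - Nat.fib (k + 2)) := by
        intro t ht
        rw [hW] at ht
        have hper := periodF k (j - Nat.fib (k + 2) + t)
          (by omega)
        rw [show j - Nat.fib (k+2) + t + Nat.fib (k+2) = j + t from by omega] at hper
        rw [show j - Nat.fib (k+2) + t = j - Nat.fib (k+2) + t from rfl, ← hper]
        · exact occ t (by rw [hW]; exact ht)
      exact ih (j - Nat.fib (k + 2)) (by omega) (by omega) occ'

lemma no_occ_small (k : ℕ) : ∀ r < Nat.fib (k + 2), ¬ OccursAt (fhat (k + 2)) fibWord r := by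
  intro r hr occ
  set F := Nat.fib (k + 2) with hF
  have hW : (fhat (k + 2)).length = F := fhat_length (k + 1)
  have hlen : (fibh k).length = F := fibh_length k
  have fib1 : Nat.fib (k + 4) = Nat.fib (k + 2) + Nat.fib (k + 3) := Nat.fib_add_two
  have fib2 : Nat.fib (k + 3) = Nat.fib (k + 1) + Nat.fib (k + 2) := Nat.fib_add_two
  have fibp1 : 0 < Nat.fib (k + 1) := Nat.fib_pos.mpr (by omega)
  -- the sum of the word equals the sum of the window
  have hsum1 : (fhat (k + 2)).sum = ∑ t ∈ Finset.range F, fibWord (r + t) := by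
    rw [sum_eq_getD, hW]
    exact Finset.sum_congr rfl fun t ht => (occ t (by rw [hW]; exact Finset.mem_range.mp ht)).symm
  -- window sum equals prefix sum by periodicity
  have hsum2 : ∑ t ∈ Finset.range F, fibWord (r + t) = ∑ t ∈ Finset.range F, fibWord t := by
    have e1 : ∑ t ∈ Finset.range F, fibWord (r + t) = ∑ p ∈ Finset.Ico r (r + F), fibWord p := by
      rw [Finset.sum_Ico_eq_sum_range]
      simp [Nat.add_sub_cancel_left]
    have e2 : ∑ p ∈ Finset.Ico r (r + F), fibWord p
        = ∑ p ∈ Finset.Ico r F, fibWord p + ∑ p ∈ Finset.Ico F (r + F), fibWord p := by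
      rw [Finset.sum_Ico_consecutive _ (by omega) (by omega)]
    have e3 : ∑ p ∈ Finset.Ico F (r + F), fibWord p = ∑ t ∈ Finset.range r, fibWord (F + t) := by
      rw [Finset.sum_Ico_eq_sum_range]
      simp [Nat.add_sub_cancel_left, Nat.add_comm]
    have e4 : ∑ t ∈ Finset.range r, fibWord (F + t) = ∑ t ∈ Finset.range r, fibWord t := by
      refine Finset.sum_congr rfl fun t ht => ?_
      have htr := Finset.mem_range.mp ht
      rw [Nat.add_comm F t]
      exact periodF k (t) (by omega)
    have e5 : ∑ t ∈ Finset.range r, fibWord t = ∑ p ∈ Finset.Ico 0 r, fibWord p := by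
      rw [Finset.range_eq_Ico]
    have e6 : ∑ p ∈ Finset.Ico 0 r, fibWord p + ∑ p ∈ Finset.Ico r F, fibWord p
        = ∑ p ∈ Finset.Ico 0 F, fibWord p := Finset.sum_Ico_consecutive _ (by omega) (by omega)
    rw [e1, e2, e3, e4, e5, Finset.range_eq_Ico]
    omega
  -- prefix sum is fib k
  have hsum3 : ∑ t ∈ Finset.range F, fibWord t = Nat.fib k := by
    rw [← fibh_sum k, sum_eq_getD, hlen]
    exact Finset.sum_congr rfl fun t ht =>
      fibWord_eq (by rw [hlen]; exact Finset.mem_range.mp ht)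
  exact fhat_sum_ne k (by rw [hsum1, hsum2, hsum3])

lemma flatten_len (i : ℕ) :
    (((List.range i).map (fun k => fhat (k + 1))).flatten).length = Nat.fib (i + 2) - 1 := by
  rw [flatten_fhat, List.length_dropLast, fibh_length]

lemma infPrefix_flatten (n : ℕ) :
    InfPrefix (((List.range n).map (fun k => fhat (k + 1))).flatten) fibWord := by
  rw [InfPrefix, flatten_fhat]
  intro i hi
  rw [List.length_dropLast] at hi
  rw [Nat.zero_add, fibWord_eq (n := n) (by omega),
    getD_prefix (List.dropLast_prefix (fibh n)) (by rw [List.length_dropLast]; omega)]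


/-- The palindromic z-factorization of the Fibonacci word is the sequence of
singular words: `pz(f) = (f̂₁, f̂₂, f̂₃, …)`. -/
theorem fib_pal_z_factorization :
    IsPalZFact fibWord (fun i => fhat (i + 1)) := by
  refine ⟨infPrefix_flatten, ?_, ?_⟩
  · intro N
    refine ⟨N + 1, ?_⟩
    rw [flatten_len]
    have := fib_lb (N + 1)
    omega
  · intro i
    have hLdef := flatten_len i
    have hWlen : (fhat (i + 1)).length = Nat.fib (i + 1) := fhat_length i
    have fibp : 0 < Nat.fib (i + 1) := Nat.fib_pos.mpr (by omega)
    refine ⟨?_, fhat_pal (i + 1), ?_, ?_, ?_⟩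
    · intro h
      have h' : fhat (i + 1) = [] := h
      rw [h'] at hWlen; simp at hWlen; omega
    · -- prefix of the suffix
      intro t ht
      have ht' : t < (fhat (i + 1)).length := ht
      rw [hWlen] at ht'
      show fibWord _ = (fhat (i + 1)).getD t 0
      have hsplit : ((List.range (i + 1)).map (fun k => fhat (k + 1))).flatten
          = ((List.range i).map (fun k => fhat (k + 1))).flatten ++ fhat (i + 1) := by
        rw [List.range_succ, List.map_append, List.flatten_append]
        simp
      have hlen1 : (((List.range (i+1)).map (fun k => fhat (k + 1))).flatten).length
          = Nat.fib (i + 3) - 1 := flatten_len (i + 1)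
      have fib3 : Nat.fib (i + 3) = Nat.fib (i + 1) + Nat.fib (i + 2) := Nat.fib_add_two
      have fibp2 : 0 < Nat.fib (i + 2) := Nat.fib_pos.mpr (by omega)
      set L := (((List.range i).map (fun k => fhat (k + 1))).flatten).length with hL
      have hq : L + (0 + t) < (((List.range (i+1)).map (fun k => fhat (k + 1))).flatten).length := by
        rw [hlen1]
        rw [hLdef] at hL
        omega
      have e1 : fibWord (L + (0 + t))
          = (((List.range (i+1)).map (fun k => fhat (k + 1))).flatten).getD (L + (0 + t)) 0 := by
        rw [flatten_fhat] at hq ⊢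
        rw [List.length_dropLast] at hq
        rw [fibWord_eq (n := i + 1) (by omega)]
        exact getD_prefix (List.dropLast_prefix _) (by rw [List.length_dropLast]; omega)
      rw [e1, hsplit, List.getD_append_right _ _ _ _ (by omega),
        show L + (0 + t) - L = t from by omega]
    · -- no earlier occurrence
      rintro ⟨j, hj, occ⟩
      rw [hLdef] at hj
      match i with
      | 0 => simp at hj
      | k + 1 =>
        rw [show k + 1 + 2 = k + 3 from rfl] at hj
        obtain ⟨r, hr, occ'⟩ := occ_reduce k j (by
          have fib3 : Nat.fib (k + 3) = Nat.fib (k + 1) + Nat.fib (k + 2) := Nat.fib_add_two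
          have : 0 < Nat.fib (k + 1) := Nat.fib_pos.mpr (by omega)
          omega) occ
        exact no_occ_small k r hr occ'
    · -- minimality
      intro u hne hpal hpre hnocc
      rw [hWlen]
      by_contra hlt
      push_neg at hlt
      match i with
      | 0 =>
        have : u.length = 0 := by
          have h1 : Nat.fib (0 + 1) = 1 := rfl
          omega
        exact hne (List.eq_nil_of_length_eq_zero this)
      | k + 1 =>
        apply hnocc
        rw [show k + 1 + 1 = k + 2 from rfl] at hlt hWlen
        rw [show k + 1 + 2 = k + 3 from rfl] at hLdef
        have fib3 : Nat.fib (k + 3) = Nat.fib (k + 1) + Nat.fib (k + 2) := Nat.fib_add_two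
        have fib4 : Nat.fib (k + 4) = Nat.fib (k + 2) + Nat.fib (k + 3) := Nat.fib_add_two
        have fibp1 : 0 < Nat.fib (k + 1) := Nat.fib_pos.mpr (by omega)
        have fibp2 : 0 < Nat.fib (k + 2) := Nat.fib_pos.mpr (by omega)
        refine ⟨Nat.fib (k + 1) - 1, by rw [hLdef]; omega, ?_⟩
        intro t ht
        have hper := periodF k (Nat.fib (k + 1) - 1 + t) (by omega)
        have hpt := hpre t ht
        simp only [suffixFrom, Nat.zero_add] at hpt
        rw [← hper,
          show Nat.fib (k + 1) - 1 + t + Nat.fib (k + 2)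
            = (List.map (fun i => fhat (i + 1)) (List.range (k + 1))).flatten.length + t from by
          rw [hLdef]; omega]
        exact hpt
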